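/- Every 2r-regular multigraph (loops allowed, with each loop contributing degree 2) admits a decomposition of its edge set into r spanning 2-regular subgraphs (2-factors). More generally, for every integer k with 1 ≤ k ≤ r, every 2r-regular multigraph has a spanning 2k-regular subgraph. -/

import Mathlib

section PT
variable {V : Type*} [Fintype V] [DecidableEq V]

/-- Turn a cycle (as a nodup list with edge multiplicities) into a balanced circulation. -/
lemma pt_cycle_circ (m : V → V → ℕ) (hsym : ∀ u v, m u v = m v u)
    (l : List V) (hnd : l.Nodup) (h2 : 2 ≤ l.length)
    (hedge : ∀ x ∈ l, 0 < m x (l.formPerm x))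
    (h2cyc : ∀ x ∈ l, l.formPerm (l.formPerm x) = x → 2 ≤ m x (l.formPerm x)) :
    ∃ c : V → V → ℕ, (∃ u v, 0 < c u v) ∧ (∀ v, c v v ≤ m v v) ∧
      (∀ u v, u ≠ v → c u v + c v u ≤ m u v) ∧
      (∀ v, ∑ u, c v u = ∑ u, c u v) := by
  classical
  set σ := l.formPerm with hσ
  have hfix : ∀ x ∈ l, σ x ≠ x := by
    intro x hx
    have hne : ∀ y : V, l ≠ [y] := by
      intro y hy; rw [hy] at h2; simp at h2
    have hset := List.support_formPerm_of_nodup' l hnd hne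
    rw [Set.ext_iff] at hset
    exact (hset x).2 (by simpa using hx)
  refine ⟨fun u v => if u ∈ l ∧ σ u = v then 1 else 0, ?_, ?_, ?_, ?_⟩
  · obtain ⟨x, hx⟩ : ∃ x, x ∈ l := by
      cases l with
      | nil => simp at h2
      | cons a t => exact ⟨a, List.mem_cons_self⟩
    exact ⟨x, σ x, by simp [hx]⟩
  · intro v
    by_cases hv : v ∈ l ∧ σ v = v
    · exact absurd hv.2 (hfix v hv.1)
    · simp [hv]
  · intro u v huv
    by_cases h1 : u ∈ l ∧ σ u = v <;> by_cases h2' : v ∈ l ∧ σ v = u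
    · have := h2cyc u h1.1 (by rw [h1.2]; exact h2'.2)
      rw [h1.2] at this
      simp [h1, h2', this]
    · have := hedge u h1.1; rw [h1.2] at this
      simp [h1, h2']; omega
    · have := hedge v h2'.1; rw [h2'.2, hsym] at this
      simp [h1, h2']; omega
    · simp [h1, h2']
  · intro v
    have hL : (∑ u, if v ∈ l ∧ σ v = u then 1 else 0) = if v ∈ l then 1 else 0 := by
      by_cases hv : v ∈ l
      · simp only [hv, true_and]
        rw [Finset.sum_ite_eq (Finset.univ) (σ v) (fun _ => 1)]
        simp [hv]
      · simp [hv]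
    have hR : (∑ u, if u ∈ l ∧ σ u = v then 1 else 0) = if σ⁻¹ v ∈ l then 1 else 0 := by
      have hpt : ∀ u : V, (if u ∈ l ∧ σ u = v then 1 else 0) =
          (if u = σ⁻¹ v then (if σ⁻¹ v ∈ l then (1:ℕ) else 0) else 0) := by
        intro u
        by_cases h : u = σ⁻¹ v
        · subst h; simp
        · have : σ u ≠ v := fun hc => h (by rw [← hc]; simp)
          simp [this, h]; intro hc; exact absurd hc h
      rw [Finset.sum_congr rfl (fun u _ => hpt u)]
      rw [Finset.sum_ite_eq' (Finset.univ) (σ⁻¹ v)]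
      simp
    rw [hL, hR]
    have : σ⁻¹ v ∈ l ↔ v ∈ l := by
      constructor
      · intro h; have := (List.formPerm_mem_iff_mem (l := l) (x := σ⁻¹ v)).2 h; change σ (σ⁻¹ v) ∈ l at this; rwa [show σ (σ⁻¹ v) = v from σ.apply_symm_apply v] at this
      · intro h
        have := (List.formPerm_mem_iff_mem (l := l) (x := σ⁻¹ v)).1 (by change σ (σ⁻¹ v) ∈ l; rwa [show σ (σ⁻¹ v) = v from σ.apply_symm_apply v])
        exact this
    simp only [this]


lemma pt_cycle_edges (m : V → V → ℕ) (L : List V) (hne : L ≠ []) (hnd : L.Nodup)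
    (hchain : List.Chain' (fun x y => 0 < m x y) L)
    (hwrap : 0 < m (L.getLast hne) (L.head hne)) :
    ∀ x ∈ L, 0 < m x (L.formPerm x) := by
  intro x hx
  obtain ⟨i, hi, rfl⟩ := List.mem_iff_getElem.1 hx
  rw [List.formPerm_apply_getElem _ hnd i hi]
  rcases Nat.lt_or_ge (i + 1) L.length with h | h
  · have hm : (i + 1) % L.length = i + 1 := Nat.mod_eq_of_lt h
    have := List.isChain_iff_getElem.1 hchain i (by omega)
    simpa [hm] using this
  · have hlen : i + 1 = L.length := by omega
    have hm : (i + 1) % L.length = 0 := by rw [hlen]; exact Nat.mod_self _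
    have h1 : L[i] = L.getLast hne := by
      rw [List.getLast_eq_getElem]; congr 1; omega
    have h2 : L[(i + 1) % L.length]'(Nat.mod_lt _ (by omega)) = L.head hne := by
      rw [List.head_eq_getElem_zero]; congr 1
    rw [h1, h2]; exact hwrap

lemma pt_no2cycle (L : List V) (hnd : L.Nodup) (h3 : 3 ≤ L.length) :
    ∀ x ∈ L, L.formPerm (L.formPerm x) ≠ x := by
  intro x hx heq
  obtain ⟨i, hi, rfl⟩ := List.mem_iff_getElem.1 hx
  have hpow : (L.formPerm ^ 2) L[i] = L[i] := by
    rw [sq, Equiv.Perm.mul_apply]; exact heq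
  rw [List.formPerm_pow_apply_getElem _ hnd 2 i hi] at hpow
  have := (List.Nodup.getElem_inj_iff hnd).1 hpow
  rcases Nat.lt_or_ge (i + 2) L.length with h | h
  · rw [Nat.mod_eq_of_lt h] at this; omega
  · rw [Nat.mod_eq_sub_mod h, Nat.mod_eq_of_lt (by omega)] at this; omega

lemma pt_find_cycle (m : V → V → ℕ) (hsym : ∀ u v, m u v = m v u)
    (hnoloop : ∀ v, m v v = 0) (heven : ∀ v, Even (∑ u, m v u)) :
    ∀ (k : ℕ) (a : V) (rest : List V), (a :: rest).Nodup →
      List.Chain' (fun x y => 0 < m x y) (a :: rest) →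
      0 < ∑ u, m a u → Fintype.card V ≤ rest.length + 1 + k →
      ∃ L : List V, L.Nodup ∧ 2 ≤ L.length ∧
        (∀ x ∈ L, 0 < m x (L.formPerm x)) ∧
        (∀ x ∈ L, L.formPerm (L.formPerm x) = x → 2 ≤ m x (L.formPerm x)) := by
  intro k
  induction k using Nat.strong_induction_on with
  | _ k ih =>
  intro a rest hnd hchain hpos hcard
  by_cases hext : ∃ w, w ∉ a :: rest ∧ 0 < m a w
  · obtain ⟨w, hwl, hw⟩ := hext
    have hnd' : (w :: a :: rest).Nodup := List.nodup_cons.2 ⟨hwl, hnd⟩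
    have hk : 1 ≤ k := by
      have := hnd'.length_le_card
      simp only [List.length_cons] at this
      omega
    obtain ⟨k', rfl⟩ : ∃ k', k = k' + 1 := ⟨k - 1, by omega⟩
    have hwa : 0 < m w a := by rw [hsym w a]; exact hw
    refine ih k' (by omega) w (a :: rest) hnd'
      (List.isChain_cons_cons.2 ⟨hwa, hchain⟩) ?_ (by simp only [List.length_cons]; omega)
    exact lt_of_lt_of_le hwa (Finset.single_le_sum (fun i _ => Nat.zero_le _) (Finset.mem_univ a))
  · have hin : ∀ w, 0 < m a w → w ∈ a :: rest := by
      intro w hw; by_contra hc; exact hext ⟨w, hc, hw⟩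
    have hne_a : ∀ w, 0 < m a w → w ≠ a := by
      intro w hw h; subst h; rw [hnoloop] at hw; omega
    cases rest with
    | nil =>
      obtain ⟨u, hu⟩ : ∃ u, 0 < m a u := by
        by_contra hc; push_neg at hc
        have : ∑ u, m a u = 0 := Finset.sum_eq_zero (fun u _ => by have := hc u; omega)
        omega
      have := hin u hu
      simp only [List.mem_cons, List.not_mem_nil, or_false] at this
      exact absurd this (hne_a u hu)
    | cons b rest' =>
      have hab : 0 < m a b := (List.isChain_cons_cons.1 hchain).1
      have hnab : a ≠ b := by
        have := (List.nodup_cons.1 hnd).1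
        intro h; exact this (h ▸ List.mem_cons_self (a := b) (l := rest'))
      by_cases hB : ∀ w, 0 < m a w → w = b
      · have hsum : ∑ u, m a u = m a b := by
          apply Finset.sum_eq_single b
          · intro u _ hub
            by_contra h; exact hub (hB u (by omega))
          · intro h; exact absurd (Finset.mem_univ b) h
        obtain ⟨t, ht⟩ := heven a
        have h2 : 2 ≤ m a b := by omega
        refine ⟨[a, b], by simp [hnab], by simp, ?_, ?_⟩
        · intro x hx
          rw [List.formPerm_pair]
          rcases List.mem_pair.1 hx with rfl | rfl
          · rw [Equiv.swap_apply_left]; omega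
          · rw [Equiv.swap_apply_right, hsym]; omega
        · intro x hx _
          rw [List.formPerm_pair]
          rcases List.mem_pair.1 hx with rfl | rfl
          · rw [Equiv.swap_apply_left]; omega
          · rw [Equiv.swap_apply_right, hsym]; omega
      · push_neg at hB
        obtain ⟨w, hw, hwb⟩ := hB
        have hwa := hne_a w hw
        have hwin := hin w hw
        simp only [List.mem_cons] at hwin
        have hwrest : w ∈ rest' := by
          rcases hwin with h | h | h
          · exact absurd h hwa
          · exact absurd h hwb
          · exact h
        obtain ⟨r₁, r₂, rfl⟩ := List.append_of_mem hwrest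
        set L := a :: b :: (r₁ ++ [w]) with hLdef
        have hdecomp : a :: b :: (r₁ ++ w :: r₂) = L ++ r₂ := by simp [hLdef]
        rw [hdecomp] at hnd hchain
        have hndL : L.Nodup := hnd.of_append_left
        have hchainL : List.Chain' (fun x y => 0 < m x y) L := (List.isChain_append.1 hchain).1
        have hneL : L ≠ [] := by simp [hLdef]
        have hlast : L.getLast hneL = w := by
          have hL2 : L = (a :: b :: r₁) ++ [w] := by simp [hLdef]
          rw [List.getLast_congr _ _ hL2, List.getLast_append_singleton]
          simp
        have hhead : L.head hneL = a := rfl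
        have hwrap : 0 < m (L.getLast hneL) (L.head hneL) := by
          rw [hlast, hhead, hsym w a]; exact hw
        have h3 : 3 ≤ L.length := by simp [hLdef]
        refine ⟨L, hndL, by omega, pt_cycle_edges m L hneL hndL hchainL hwrap,
          fun x hx h2c => absurd h2c (pt_no2cycle L hndL h3 x hx)⟩


lemma pt_exists_circulation (m : V → V → ℕ) (hsym : ∀ u v, m u v = m v u)
    (heven : ∀ v, Even ((∑ u, m v u) + m v v)) {a b : V} (hab : 0 < m a b) :
    ∃ c : V → V → ℕ, (∃ u v, 0 < c u v) ∧ (∀ v, c v v ≤ m v v) ∧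
      (∀ u v, u ≠ v → c u v + c v u ≤ m u v) ∧
      (∀ v, ∑ u, c v u = ∑ u, c u v) := by
  classical
  by_cases hloop : ∃ v, 0 < m v v
  · obtain ⟨v₀, hv₀⟩ := hloop
    refine ⟨fun u v => if u = v₀ ∧ v = v₀ then 1 else 0, ⟨v₀, v₀, by simp⟩, ?_, ?_, ?_⟩
    · intro v
      by_cases h : v = v₀
      · subst h; simpa using Nat.succ_le_of_lt hv₀
      · simp [h]
    · intro u v huv
      have h1 : ¬(u = v₀ ∧ v = v₀) := fun ⟨x1, x2⟩ => huv (x1.trans x2.symm)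
      have h2 : ¬(v = v₀ ∧ u = v₀) := fun ⟨x1, x2⟩ => huv (x2.trans x1.symm)
      simp [h1, h2]
    · intro v
      by_cases h : v = v₀ <;> simp [h, Finset.sum_ite_eq', Finset.sum_ite_eq]
  · push_neg at hloop
    have hnl : ∀ v, m v v = 0 := fun v => by have := hloop v; omega
    have hnab : a ≠ b := by intro h; rw [h, hnl] at hab; omega
    have heven' : ∀ v, Even (∑ u, m v u) := by
      intro v; have := heven v; rwa [hnl, add_zero] at this
    obtain ⟨L, hndL, h2L, hedgeL, h2cycL⟩ :=
      pt_find_cycle m hsym hnl heven' (Fintype.card V) a []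
        (by simp) (List.isChain_singleton a) (lt_of_lt_of_le hab
          (Finset.single_le_sum (fun i _ => Nat.zero_le _) (Finset.mem_univ b)))
        (by simp)
    exact pt_cycle_circ m hsym L hndL h2L hedgeL h2cycL

lemma pt_exists_orientation : ∀ (N : ℕ) (m : V → V → ℕ), (∑ v, ∑ u, m v u) ≤ N →
    (∀ u v, m u v = m v u) → (∀ v, Even ((∑ u, m v u) + m v v)) →
    ∃ d : V → V → ℕ, (∀ v, d v v = m v v) ∧
      (∀ u v, u ≠ v → d u v + d v u = m u v) ∧
      (∀ v, ∑ u, d v u = ∑ u, d u v) := by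
  intro N
  induction N with
  | zero =>
    intro m hw _ _
    have hz : ∀ u v, m u v = 0 := by
      intro u v
      have h1 : ∑ x, m u x ≤ ∑ v, ∑ x, m v x :=
        Finset.single_le_sum (f := fun v => ∑ x, m v x) (fun i _ => Nat.zero_le _) (Finset.mem_univ u)
      have h2 : m u v ≤ ∑ x, m u x :=
        Finset.single_le_sum (fun i _ => Nat.zero_le _) (Finset.mem_univ v)
      omega
    exact ⟨m, fun v => rfl, fun u v _ => by rw [hz u v, hz v u], fun v => by
      simp [hz]⟩
  | succ N ih =>
    intro m hw hsym heven
    by_cases hz : ∀ u v, m u v = 0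
    · exact ⟨m, fun v => rfl, fun u v _ => by rw [hz u v, hz v u], fun v => by simp [hz]⟩
    · push_neg at hz
      obtain ⟨a, b, hab⟩ := hz
      replace hab : 0 < m a b := Nat.pos_of_ne_zero hab
      obtain ⟨c, ⟨u₀, v₀, hc₀⟩, hdiag, hoff, hbal⟩ := pt_exists_circulation m hsym heven hab
      set m' : V → V → ℕ := fun u v => if u = v then m u u - c u u else m u v - c u v - c v u
        with hm'
      have hkey : ∀ u v, u ≠ v → m' u v + (c u v + c v u) = m u v := by
        intro u v h
        have := hoff u v h
        simp only [hm', if_neg h]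
        omega
      have hkeyd : ∀ v, m' v v + c v v = m v v := by
        intro v
        have := hdiag v
        simp only [hm', if_pos rfl]
        omega
      have hle : ∀ u v, m' u v ≤ m u v := by
        intro u v
        by_cases h : u = v
        · subst h; have := hkeyd u; omega
        · have := hkey u v h; omega
      have hlt : m' u₀ v₀ < m u₀ v₀ := by
        by_cases h : u₀ = v₀
        · subst h; have := hkeyd u₀; omega
        · have := hkey u₀ v₀ h; omega
      have hw' : (∑ v, ∑ u, m' v u) ≤ N := by
        have hstrict : (∑ v, ∑ u, m' v u) < ∑ v, ∑ u, m v u := by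
          apply Finset.sum_lt_sum
          · intro i _
            exact Finset.sum_le_sum (fun j _ => hle i j)
          · refine ⟨u₀, Finset.mem_univ _, ?_⟩
            apply Finset.sum_lt_sum
            · intro j _; exact hle u₀ j
            · exact ⟨v₀, Finset.mem_univ _, hlt⟩
        omega
      have hsym' : ∀ u v, m' u v = m' v u := by
        intro u v
        by_cases h : u = v
        · subst h; rfl
        · simp only [hm', if_neg h, if_neg (Ne.symm h)]
          rw [hsym u v]
          omega
      have hdegeq : ∀ v, ((∑ u, m' v u) + m' v v) + 2 * (∑ u, c v u) =
          (∑ u, m v u) + m v v := by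
        intro v
        have hS : ∑ u, (m' v u + (c v u + c u v)) =
            ∑ u, (m v u + if u = v then c v v else 0) := by
          apply Finset.sum_congr rfl
          intro u _
          by_cases h : u = v
          · subst h
            have := hkeyd u
            rw [if_pos rfl]
            omega
          · rw [if_neg h]
            have := hkey v u (Ne.symm h)
            omega
        have h1 : ∑ u, (m' v u + (c v u + c u v)) =
            (∑ u, m' v u) + ((∑ u, c v u) + (∑ u, c u v)) := by
          rw [Finset.sum_add_distrib, Finset.sum_add_distrib]
        have h2 : ∑ u, (m v u + if u = v then c v v else 0) = (∑ u, m v u) + c v v := by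
          rw [Finset.sum_add_distrib, Finset.sum_ite_eq' Finset.univ v (fun _ => c v v)]
          simp
        have hS2 : (∑ u, m' v u) + ((∑ u, c v u) + (∑ u, c u v)) = (∑ u, m v u) + c v v := by
          rw [← h1, hS, h2]
        have hb := hbal v
        have hd := hkeyd v
        omega
      have heven' : ∀ v, Even ((∑ u, m' v u) + m' v v) := by
        intro v
        obtain ⟨t, ht⟩ := heven v
        have := hdegeq v
        exact ⟨t - ∑ u, c v u, by omega⟩
      obtain ⟨d', hd'diag, hd'off, hd'bal⟩ := ih m' hw' hsym' heven'
      refine ⟨fun u v => c u v + d' u v, ?_, ?_, ?_⟩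
      · intro v
        show c v v + d' v v = m v v
        have h1 := hd'diag v
        have h2 := hkeyd v
        omega
      · intro u v h
        show (c u v + d' u v) + (c v u + d' v u) = m u v
        have h1 := hd'off u v h
        have h2 := hkey u v h
        omega
      · intro v
        show (∑ u, (c v u + d' v u)) = ∑ u, (c u v + d' u v)
        rw [Finset.sum_add_distrib, Finset.sum_add_distrib, hbal v, hd'bal v]


lemma pt_hall (s : ℕ) (hs : 1 ≤ s) (d : V → V → ℕ)
    (hrow : ∀ v, ∑ u, d v u = s) (hcol : ∀ v, ∑ u, d u v = s) :
    ∃ σ : Equiv.Perm V, ∀ v, 0 < d v (σ v) := by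
  classical
  set t : V → Finset V := fun v => Finset.univ.filter (fun u => 0 < d v u) with ht
  have hall : ∀ S : Finset V, S.card ≤ (S.biUnion t).card := by
    intro S
    set T := S.biUnion t with hT
    have key : s * S.card ≤ s * T.card := by
      have e1 : s * S.card = ∑ v ∈ S, ∑ u, d v u := by
        rw [Finset.sum_congr rfl (fun v _ => hrow v), Finset.sum_const, smul_eq_mul, mul_comm]
      have e2 : ∀ v ∈ S, ∑ u, d v u = ∑ u ∈ T, d v u := by
        intro v hv
        refine (Finset.sum_subset (Finset.subset_univ T) ?_).symm
        intro x _ hx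
        by_contra h
        exact hx (Finset.mem_biUnion.2 ⟨v, hv, Finset.mem_filter.2 ⟨Finset.mem_univ _, by omega⟩⟩)
      have e3 : ∑ v ∈ S, ∑ u ∈ T, d v u = ∑ u ∈ T, ∑ v ∈ S, d v u := Finset.sum_comm
      have e4 : ∀ u ∈ T, ∑ v ∈ S, d v u ≤ s := by
        intro u _
        rw [← hcol u]
        exact Finset.sum_le_sum_of_subset (Finset.subset_univ S)
      calc s * S.card = ∑ v ∈ S, ∑ u, d v u := e1
        _ = ∑ v ∈ S, ∑ u ∈ T, d v u := Finset.sum_congr rfl e2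
        _ = ∑ u ∈ T, ∑ v ∈ S, d v u := e3
        _ ≤ ∑ _u ∈ T, s := Finset.sum_le_sum e4
        _ = s * T.card := by rw [Finset.sum_const, smul_eq_mul, mul_comm]
    exact Nat.le_of_mul_le_mul_left key hs
  obtain ⟨f, hfinj, hf⟩ := (Finset.all_card_le_biUnion_card_iff_exists_injective t).1 hall
  refine ⟨Equiv.ofBijective f ((Finite.injective_iff_bijective).1 hfinj), fun v => ?_⟩
  have := hf v
  rw [ht] at this
  simpa using (Finset.mem_filter.1 this).2

lemma pt_birkhoff : ∀ (s : ℕ) (d : V → V → ℕ), (∀ v, ∑ u, d v u = s) → (∀ v, ∑ u, d u v = s) →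
    ∃ g : Fin s → Equiv.Perm V, ∀ u v, d u v = ∑ t, (if g t u = v then 1 else 0) := by
  intro s
  induction s with
  | zero =>
    intro d hrow _
    refine ⟨Fin.elim0, fun u v => ?_⟩
    have h1 : d u v ≤ ∑ x, d u x :=
      Finset.single_le_sum (fun i _ => Nat.zero_le _) (Finset.mem_univ v)
    rw [hrow u] at h1
    simp
    omega
  | succ s ih =>
    intro d hrow hcol
    obtain ⟨σ, hσ⟩ := pt_hall (s + 1) (by omega) d hrow hcol
    set d' : V → V → ℕ := fun u v => d u v - (if σ u = v then 1 else 0) with hd'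
    have hpt : ∀ u v, d' u v + (if σ u = v then 1 else 0) = d u v := by
      intro u v
      by_cases h : σ u = v
      · have h0 : 0 < d u v := h ▸ hσ u
        simp only [hd', if_pos h]
        omega
      · simp [hd', h]
    have hrow' : ∀ v, ∑ u, d' v u = s := by
      intro v
      have h1 : ∑ u, (d' v u + if σ v = u then 1 else 0) = ∑ u, d v u :=
        Finset.sum_congr rfl (fun u _ => hpt v u)
      rw [Finset.sum_add_distrib, Finset.sum_ite_eq Finset.univ (σ v) (fun _ => 1)] at h1
      simp only [Finset.mem_univ, if_pos] at h1
      rw [hrow v] at h1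
      omega
    have hcol' : ∀ v, ∑ u, d' u v = s := by
      intro v
      have h1 : ∑ u, (d' u v + if σ u = v then 1 else 0) = ∑ u, d u v :=
        Finset.sum_congr rfl (fun u _ => hpt u v)
      have h2 : ∑ u, (if σ u = v then (1:ℕ) else 0) = 1 := by
        have hpt2 : ∀ u : V, (if σ u = v then (1:ℕ) else 0) =
            (if u = σ⁻¹ v then (1:ℕ) else 0) := by
          intro u
          congr 1
          rw [eq_iff_iff]
          constructor <;> intro h
          · rw [← h]; simp
          · rw [h]; simp
        rw [Finset.sum_congr rfl (fun u _ => hpt2 u),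
          Finset.sum_ite_eq' Finset.univ (σ⁻¹ v) (fun _ => 1)]
        simp
      rw [Finset.sum_add_distrib, h2] at h1
      rw [hcol v] at h1
      omega
    obtain ⟨g', hg'⟩ := ih d' hrow' hcol'
    refine ⟨Fin.cons σ g', fun u v => ?_⟩
    rw [Fin.sum_univ_succ]
    simp only [Fin.cons_zero, Fin.cons_succ]
    rw [← hg' u v]
    have := hpt u v
    omega


lemma pt_main (r : ℕ) (m : V → V → ℕ) (hsym : ∀ u v, m u v = m v u)
    (hreg : ∀ v : V, (∑ u, m v u) + m v v = 2 * r) :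
    ∃ f : Fin r → V → V → ℕ,
      (∀ t u v, f t u v = f t v u) ∧
      (∀ u v, ∑ t, f t u v = m u v) ∧
      (∀ t v, (∑ u, f t v u) + f t v v = 2) := by
  classical
  have heven : ∀ v, Even ((∑ u, m v u) + m v v) := fun v => by
    rw [hreg v]; exact even_two_mul r
  obtain ⟨d, hddiag, hdoff, hdbal⟩ :=
    pt_exists_orientation (∑ v, ∑ u, m v u) m le_rfl hsym heven
  have hsum2 : ∀ v, (∑ u, d v u) + (∑ u, d u v) = 2 * r := by
    intro v
    have h1 : ∑ u, (d v u + d u v) = ∑ u, (m v u + if u = v then m v v else 0) := by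
      apply Finset.sum_congr rfl
      intro u _
      by_cases h : u = v
      · subst h
        rw [if_pos rfl, hddiag u]
      · rw [if_neg h]
        have := hdoff v u (fun hh => h hh.symm)
        omega
    rw [Finset.sum_add_distrib, Finset.sum_add_distrib,
      Finset.sum_ite_eq' Finset.univ v (fun _ => m v v)] at h1
    simp only [Finset.mem_univ, if_pos] at h1
    rw [h1]
    exact hreg v
  have hrow : ∀ v, ∑ u, d v u = r := by
    intro v
    have h1 := hsum2 v
    have h2 := hdbal v
    omega
  have hcol : ∀ v, ∑ u, d u v = r := by
    intro v
    have h1 := hsum2 v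
    have h2 := hdbal v
    omega
  obtain ⟨g, hg⟩ := pt_birkhoff r d hrow hcol
  refine ⟨fun t u v => if u = v then (if g t u = u then 1 else 0)
    else ((if g t u = v then 1 else 0) + (if g t v = u then 1 else 0)), ?_, ?_, ?_⟩
  · intro t u v
    by_cases h : u = v
    · subst h; rfl
    · simp only [if_neg h, if_neg (Ne.symm h)]
      exact add_comm _ _
  · intro u v
    by_cases h : u = v
    · subst h
      simp only [eq_self_iff_true, if_true]
      rw [← hg u u, hddiag u]
    · simp only [if_neg h]
      rw [Finset.sum_add_distrib, ← hg u v, ← hg v u]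
      exact hdoff u v h
  · intro t v
    have hB : ∑ u, (if g t u = v then (1:ℕ) else 0) = 1 := by
      have hpt2 : ∀ u : V, (if g t u = v then (1:ℕ) else 0) =
          (if u = (g t)⁻¹ v then (1:ℕ) else 0) := by
        intro u
        congr 1
        rw [eq_iff_iff]
        constructor <;> intro h
        · rw [← h]; simp
        · rw [h]; simp
      rw [Finset.sum_congr rfl (fun u _ => hpt2 u),
        Finset.sum_ite_eq' Finset.univ ((g t)⁻¹ v) (fun _ => 1)]
      simp
    have hA : ∑ u, (if g t v = u then (1:ℕ) else 0) = 1 := by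
      rw [Finset.sum_ite_eq Finset.univ (g t v) (fun _ => 1)]
      simp
    have hpt : ∀ u : V, (if v = u then (if g t v = v then 1 else 0)
        else ((if g t v = u then 1 else 0) + (if g t u = v then 1 else 0)))
        + (if u = v then (if g t v = v then (1:ℕ) else 0) else 0) =
        (if g t v = u then 1 else 0) + (if g t u = v then 1 else 0) := by
      intro u
      by_cases h : u = v
      · subst h
        simp only [eq_self_iff_true, if_true]
      · rw [if_neg (Ne.symm h), if_neg h]
        omega
    have hsum : ∑ u, ((if v = u then (if g t v = v then 1 else 0)
        else ((if g t v = u then 1 else 0) + (if g t u = v then 1 else 0)))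
        + (if u = v then (if g t v = v then (1:ℕ) else 0) else 0)) = 2 := by
      rw [Finset.sum_congr rfl (fun u _ => hpt u), Finset.sum_add_distrib, hA, hB]
    rw [Finset.sum_add_distrib, Finset.sum_ite_eq' Finset.univ v
      (fun _ => if g t v = v then (1:ℕ) else 0)] at hsum
    simp only [Finset.mem_univ, if_pos] at hsum
    simpa using hsum
end PT
/-- Petersen's 2-factor theorem. A multigraph is modeled by a symmetric
edge-multiplicity function `m : V → V → ℕ`, where `m v v` is the number of
loops at `v` and a loop contributes 2 to the degree, so the degree of `v` is
`(∑ u, m v u) + m v v`. Every `2r`-regular multigraph decomposes into `r`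
spanning 2-regular subgraphs, and for every `1 ≤ k ≤ r` it has a spanning
`2k`-regular subgraph. -/
theorem petersen_two_factor (V : Type*) [Fintype V] [DecidableEq V] (r : ℕ) (hr : 1 ≤ r)
    (m : V → V → ℕ) (hsym : ∀ u v, m u v = m v u)
    (hreg : ∀ v : V, (∑ u, m v u) + m v v = 2 * r) :
    (∃ f : Fin r → V → V → ℕ,
      (∀ t u v, f t u v = f t v u) ∧
      (∀ u v, ∑ t, f t u v = m u v) ∧
      (∀ t v, (∑ u, f t v u) + f t v v = 2)) ∧
    (∀ k : ℕ, 1 ≤ k → k ≤ r → ∃ m' : V → V → ℕ,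
      (∀ u v, m' u v ≤ m u v) ∧ (∀ u v, m' u v = m' v u) ∧
      (∀ v : V, (∑ u, m' v u) + m' v v = 2 * k)) := by
  classical
  obtain ⟨f, hf1, hf2, hf3⟩ := pt_main r m hsym hreg
  refine ⟨⟨f, hf1, hf2, hf3⟩, ?_⟩
  intro k _ _
  refine ⟨fun u v => ∑ t : Fin r, if (t : ℕ) < k then f t u v else 0, ?_, ?_, ?_⟩
  · intro u v
    rw [← hf2 u v]
    refine Finset.sum_le_sum (fun t _ => ?_)
    by_cases h : (t : ℕ) < k
    · rw [if_pos h]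
    · rw [if_neg h]; exact Nat.zero_le _
  · intro u v
    exact Finset.sum_congr rfl (fun t _ => by rw [hf1 t u v])
  · intro v
    show (∑ u, ∑ t : Fin r, if (t : ℕ) < k then f t v u else 0) +
      (∑ t : Fin r, if (t : ℕ) < k then f t v v else 0) = 2 * k
    have hswap : ∑ u, ∑ t : Fin r, (if (t : ℕ) < k then f t v u else 0) =
        ∑ t : Fin r, ∑ u, (if (t : ℕ) < k then f t v u else 0) := Finset.sum_comm
    have hinner : ∀ t : Fin r, (∑ u, (if (t : ℕ) < k then f t v u else 0))
        + (if (t : ℕ) < k then f t v v else 0) = if (t : ℕ) < k then 2 else 0 := by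
      intro t
      by_cases h : (t : ℕ) < k
      · simp only [if_pos h]
        exact hf3 t v
      · simp [h]
    rw [hswap, ← Finset.sum_add_distrib, Finset.sum_congr rfl (fun t _ => hinner t)]
    rw [Fin.sum_univ_eq_sum_range (fun i => if i < k then (2:ℕ) else 0) r, ← Finset.sum_filter]
    have hfil : (Finset.range r).filter (fun i => i < k) = Finset.range k := by
      ext i
      simp only [Finset.mem_filter, Finset.mem_range]
      omega
    rw [hfil, Finset.sum_const, Finset.card_range, smul_eq_mul, mul_comm]
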